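/- Let G be a DAG with evaluation semantics f_U, let Z ⊆ V with fixed conditioning values A_Z, and suppose U_0, U_1, U_2 is a sequence of exogenous-term assignments such that: f_{U_0} and f_{U_2} both agree with A_Z on Z; U_1 differs from U_0 only on unblocked ancestors of u given Z; U_2 differs from U_1 only on unblocked ancestors (given Z) of nodes z ∈ Z that have an unblocked ancestor on which U_0 and U_1 differ; and f_{U_0}(v) ≠ f_{U_2}(v) for some v ∉ Z with v ≠ u. Then u and v are d-connected given Z in G. -/

import Mathlib

section CausalDefs

variable {V : Type}

/-- The edge relation has no directed cycles. -/
def AcyclicRel (E : V → V → Prop) : Prop := ∀ v, ¬ Relation.TransGen E v v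

/-- `b` is a mediator on the (undirected) path `l`. -/
def Mediator (E : V → V → Prop) (l : List V) (b : V) : Prop :=
  ∃ a c, [a, b, c] <:+: l ∧ ((E a b ∧ E b c) ∨ (E b a ∧ E c b))

/-- `b` is a confounder on the (undirected) path `l`. -/
def Confounder (E : V → V → Prop) (l : List V) (b : V) : Prop :=
  ∃ a c, [a, b, c] <:+: l ∧ E b a ∧ E b c

/-- `b` is a collider on the (undirected) path `l`. -/
def Collider (E : V → V → Prop) (l : List V) (b : V) : Prop :=
  ∃ a c, [a, b, c] <:+: l ∧ E a b ∧ E c b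

/-- An acyclic undirected path: consecutive nodes joined by an edge in some
direction, no repeated nodes. -/
def UPath (E : V → V → Prop) (l : List V) : Prop :=
  l.Chain' (fun a b => E a b ∨ E b a) ∧ l.Nodup

/-- An acyclic undirected path from `u` to `v` (with at least one edge). -/
def UPathFrom (E : V → V → Prop) (u v : V) (l : List V) : Prop :=
  UPath E l ∧ l.head? = some u ∧ l.getLast? = some v ∧ 2 ≤ l.length

/-- A directed walk from `u` to `v` (nodes may repeat). -/
def DirWalkFrom (E : V → V → Prop) (u v : V) (l : List V) : Prop :=
  l.Chain' E ∧ l.head? = some u ∧ l.getLast? = some v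

/-- An acyclic directed path from `u` to `v`. -/
def DirPathFrom (E : V → V → Prop) (u v : V) (l : List V) : Prop :=
  l.Chain' E ∧ l.Nodup ∧ l.head? = some u ∧ l.getLast? = some v

/-- `d` is a descendant of `b` (every node is its own descendant). -/
def Descendant (E : V → V → Prop) (b d : V) : Prop := Relation.ReflTransGen E b d

/-- The path `l` is d-connected given `Z`: no mediator or confounder on `l` is
in `Z`, and every collider on `l` has a descendant in `Z`. -/
def DConnPath (E : V → V → Prop) (Z : Set V) (l : List V) : Prop :=
  (∀ b, Mediator E l b → b ∉ Z) ∧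
  (∀ b, Confounder E l b → b ∉ Z) ∧
  (∀ b, Collider E l b → ∃ d ∈ Z, Descendant E b d)

/-- `u` and `v` are d-connected given `Z`. -/
def DConnected (E : V → V → Prop) (Z : Set V) (u v : V) : Prop :=
  ∃ l, UPathFrom E u v l ∧ DConnPath E Z l

/-- `u` and `v` are d-separated given `Z`: every acyclic undirected path from
`u` to `v` is blocked. -/
def DSeparated (E : V → V → Prop) (Z : Set V) (u v : V) : Prop :=
  ∀ l, UPathFrom E u v l →
    (∃ b ∈ Z, Mediator E l b ∨ Confounder E l b) ∨
    (∃ b, Collider E l b ∧ ¬ ∃ d ∈ Z, Descendant E b d)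

/-- `w` is an unblocked ancestor of `u` given `Z`: `w = u`, or there is a
directed path from `w` to `u` on which neither `w` nor any internal node
lies in `Z`. -/
def UnblockedAnc (E : V → V → Prop) (Z : Set V) (w u : V) : Prop :=
  w = u ∨ ∃ l : List V, l.Chain' E ∧ l.head? = some w ∧ l.getLast? = some u ∧
    ∀ x ∈ l.dropLast, x ∉ Z

/-- `x` is a source on the path `l`: an endpoint whose adjacent path edge
points away from it, or an (internal) confounder. -/
def SourceOn (E : V → V → Prop) (l : List V) (x : V) : Prop :=
  (∃ b, [x, b] <+: l ∧ E x b) ∨ (∃ b, [b, x] <:+ l ∧ E x b) ∨ Confounder E l x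

end CausalDefs


section Helpers

variable {V : Type} {E : V → V → Prop} {Z : Set V}

private lemma acSelf (h : AcyclicRel E) {a : V} (h1 : E a a) : False :=
  h a (Relation.TransGen.single h1)

private lemma acBoth (h : AcyclicRel E) {a b : V} (h1 : E a b) (h2 : E b a) : False :=
  h a (Relation.TransGen.head h1 (Relation.TransGen.single h2))

private lemma chainPair {l : List V} {a b : V} (hc : List.Chain' E l)
    (h : [a, b] <:+: l) : E a b := by
  have h2 := hc.infix h
  exact List.isChain_pair.mp h2

private lemma chainTriple {l : List V} {a b c : V} (hc : List.Chain' E l)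
    (h : [a, b, c] <:+: l) : E a b ∧ E b c := by
  have h2 := hc.infix h
  rw [List.isChain_cons_cons, List.isChain_pair] at h2
  exact h2

private lemma tripleTail {l : List V} {a b c : V} (h : [a, b, c] <:+: l) :
    [b, c] <:+: l := by
  obtain ⟨s, t, rfl⟩ := h
  exact ⟨s ++ [a], t, by simp⟩

private lemma tripleInit {l : List V} {a b c : V} (h : [a, b, c] <:+: l) :
    [a, b] <:+: l := by
  obtain ⟨s, t, rfl⟩ := h
  exact ⟨s, c :: t, by simp⟩

private lemma memDropLast {l : List V} {a b : V} (h : [a, b] <:+: l) :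
    a ∈ l.dropLast := by
  obtain ⟨s, t, rfl⟩ := h
  rw [show s ++ [a, b] ++ t = (s ++ [a]) ++ (b :: t) by simp]
  rw [List.dropLast_append_of_ne_nil (by simp)]
  simp

private lemma suffGetLast {s l : List V} (h : s <:+ l) (hs : s ≠ []) :
    l.getLast? = s.getLast? := by
  obtain ⟨t, rfl⟩ := h
  exact List.getLast?_append_of_ne_nil t hs

private lemma tripleInfixAppend : ∀ {l₁ l₂ : List V} {a b c : V}, [a, b, c] <:+: l₁ ++ l₂ →
    [a, b, c] <:+: l₁ ∨ [a, b, c] <:+: l₂ ∨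
    ([a, b] <:+ l₁ ∧ ∃ t, l₂ = c :: t) ∨
    ((∃ t, l₁ = t ++ [a]) ∧ [b, c] <+: l₂) := by
  intro l₁
  induction l₁ with
  | nil => intro l₂ a b c h; exact Or.inr (Or.inl (by simpa using h))
  | cons x t ih =>
    intro l₂ a b c h
    rw [List.cons_append, List.infix_cons_iff] at h
    rcases h with h | h
    · rw [List.cons_prefix_cons] at h
      obtain ⟨rfl, h⟩ := h
      match t, h with
      | [], h =>
        exact Or.inr (Or.inr (Or.inr ⟨⟨[], rfl⟩, by simpa using h⟩))
      | [d], h =>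
        rw [show [d] ++ l₂ = d :: l₂ from rfl, List.cons_prefix_cons] at h
        obtain ⟨rfl, h⟩ := h
        obtain ⟨t', rfl⟩ := h
        exact Or.inr (Or.inr (Or.inl ⟨List.suffix_refl _, t', by simp⟩))
      | d :: e :: t', h =>
        rw [show (d :: e :: t') ++ l₂ = d :: e :: (t' ++ l₂) from rfl,
          List.cons_prefix_cons, List.cons_prefix_cons] at h
        obtain ⟨rfl, rfl, _⟩ := h
        exact Or.inl ⟨[], t', by simp⟩
    · rcases ih h with h | h | h | h
      · exact Or.inl (h.trans ⟨[x], [], by simp⟩)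
      · exact Or.inr (Or.inl h)
      · exact Or.inr (Or.inr (Or.inl ⟨h.1.trans (List.suffix_cons x t), h.2⟩))
      · obtain ⟨⟨t', rfl⟩, h2⟩ := h
        exact Or.inr (Or.inr (Or.inr ⟨⟨x :: t', rfl⟩, h2⟩))

private lemma pairSuffixAppend : ∀ {l₁ l₂ : List V} {x y : V}, [x, y] <:+ l₁ ++ l₂ →
    [x, y] <:+ l₂ ∨ (∃ t, l₁ = t ++ [x] ∧ l₂ = [y]) ∨ ([x, y] <:+ l₁ ∧ l₂ = []) := by
  intro l₁
  induction l₁ with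
  | nil => intro l₂ x y h; exact Or.inl (by simpa using h)
  | cons h t ih =>
    intro l₂ x y hs
    rw [List.cons_append, List.suffix_cons_iff] at hs
    rcases hs with hs | hs
    · have : t ++ l₂ = [y] := by
        have := congrArg List.tail hs
        simpa using this.symm
      have hx : x = h := by
        have := congrArg List.head? hs
        simpa using this
      subst hx
      cases t with
      | nil =>
        exact Or.inr (Or.inl ⟨[], rfl, by simpa using this⟩)
      | cons d t' =>
        rw [List.cons_append] at this
        obtain ⟨rfl, h2⟩ := List.cons.inj this
        have h3 : t' = [] ∧ l₂ = [] := by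
          constructor
          · cases t' with
            | nil => rfl
            | cons a b => simp at h2
          · cases t' with
            | nil => simpa using h2
            | cons a b => simp at h2
        obtain ⟨rfl, rfl⟩ := h3
        exact Or.inr (Or.inr ⟨List.suffix_refl _, rfl⟩)
    · rcases ih hs with h2 | h2 | h2
      · exact Or.inl h2
      · obtain ⟨t', rfl, h3⟩ := h2
        exact Or.inr (Or.inl ⟨h :: t', rfl, h3⟩)
      · exact Or.inr (Or.inr ⟨h2.1.trans (List.suffix_cons h t), h2.2⟩)

private lemma pairPrefixAppend : ∀ {l₁ l₂ : List V} {x y : V}, [x, y] <+: l₁ ++ l₂ →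
    [x, y] <+: l₁ ∨ (l₁ = [x] ∧ ∃ t, l₂ = y :: t) ∨ (l₁ = [] ∧ [x, y] <+: l₂) := by
  intro l₁ l₂ x y h
  match l₁, h with
  | [], h => exact Or.inr (Or.inr ⟨rfl, by simpa using h⟩)
  | [a], h =>
    rw [show [a] ++ l₂ = a :: l₂ from rfl, List.cons_prefix_cons] at h
    obtain ⟨rfl, h⟩ := h
    obtain ⟨t', rfl⟩ := h
    exact Or.inr (Or.inl ⟨rfl, t', by simp⟩)
  | a :: b :: t, h =>
    rw [show (a :: b :: t) ++ l₂ = a :: b :: (t ++ l₂) from rfl,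
      List.cons_prefix_cons, List.cons_prefix_cons] at h
    obtain ⟨rfl, rfl, _⟩ := h
    exact Or.inl ⟨t, rfl⟩

private lemma existsDup : ∀ {l : List V}, ¬ l.Nodup → ∃ p x m s, l = p ++ x :: (m ++ x :: s) := by
  intro l
  induction l with
  | nil => intro h; exact absurd List.nodup_nil h
  | cons h t ih =>
    intro hd
    by_cases hmem : h ∈ t
    · obtain ⟨m, s, rfl⟩ := List.append_of_mem hmem
      exact ⟨[], h, m, s, rfl⟩
    · have hnd : ¬ t.Nodup := by
        intro hnd
        exact hd (List.nodup_cons.mpr ⟨hmem, hnd⟩)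
      obtain ⟨p, x, m, s, rfl⟩ := ih hnd
      exact ⟨h :: p, x, m, s, rfl⟩

end Helpers

section Helpers2

variable {V : Type} {E : V → V → Prop} {Z : Set V}

/-- In a closed-ish undirected walk whose first edge points forward and whose
last edge points backward, there is a collider which is a descendant of the
start node. -/
private lemma findCollider (hacyc : AcyclicRel E) :
    ∀ (m : List V) (x c m0 e : V),
      ((x :: m) ++ [c]).Chain' (fun a b => E a b ∨ E b a) →
      (m ++ [c]).head? = some m0 → E x m0 →
      (x :: m).getLast? = some e → E c e →
      ∃ y α γ, [α, y, γ] <:+: (x :: m) ++ [c] ∧ E α y ∧ E γ y ∧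
        Relation.ReflTransGen E x y := by
  intro m
  induction m with
  | nil =>
    intro x c m0 e hch hh hx hl hc
    simp only [List.nil_append, List.head?_cons, Option.some.injEq] at hh
    simp only [List.getLast?_singleton, Option.some.injEq] at hl
    subst hh; subst hl
    exact absurd hx (fun h => acBoth hacyc h hc)
  | cons d m' ih =>
    intro x c m0 e hch hh hx hl hc
    have hm0 : d = m0 := by simpa using hh
    subst hm0
    obtain ⟨d', rest, hrest⟩ : ∃ d' rest, m' ++ [c] = d' :: rest := by
      cases m' with
      | nil => exact ⟨c, [], rfl⟩
      | cons g m'' => exact ⟨g, m'' ++ [c], rfl⟩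
    have hlist : (x :: d :: m') ++ [c] = x :: d :: d' :: rest := by
      rw [show (x :: d :: m') ++ [c] = x :: d :: (m' ++ [c]) from rfl, hrest]
    have hch2 : (x :: d :: d' :: rest).Chain' (fun a b => E a b ∨ E b a) := by
      rw [← hlist]; exact hch
    have hdd' : E d d' ∨ E d' d := (List.isChain_cons_cons.mp (List.isChain_cons_cons.mp hch2).2).1
    rcases hdd' with hdd' | hdd'
    · -- recurse
      have hch3 : ((d :: m') ++ [c]).Chain' (fun a b => E a b ∨ E b a) := by
        have := hch2
        rw [List.Chain', List.isChain_cons_cons] at this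
        rw [show (d :: m') ++ [c] = d :: d' :: rest by
          rw [show (d :: m') ++ [c] = d :: (m' ++ [c]) from rfl, hrest]]
        exact this.2
      have hhe : (m' ++ [c]).head? = some d' := by rw [hrest]; rfl
      have hle : (d :: m').getLast? = some e := by
        rw [← List.getLast?_cons_cons (a := x)]; exact hl
      obtain ⟨y, α, γ, hinf, h1, h2, hrt⟩ := ih d c d' e hch3 hhe hdd' hle hc
      refine ⟨y, α, γ, ?_, h1, h2, Relation.ReflTransGen.head hx hrt⟩
      refine hinf.trans ?_
      exact ⟨[x], [], by simp⟩
    · -- collider at d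
      refine ⟨d, x, d', ?_, hx, hdd', Relation.ReflTransGen.single hx⟩
      rw [hlist]
      exact ⟨[], rest, by simp⟩

/-- Concatenating the reverse of a directed unblocked path `b → y` with a
directed unblocked path `b → z` yields a walk from `y` to `z` on which every
triple-center is outside `Z` and is not a collider; moreover information about
the edges at the two ends. -/
private lemma trek (hacyc : AcyclicRel E) {b y z : V} {l1 l2 : List V}
    (c1 : l1.Chain' E) (h1 : l1.head? = some b) (g1 : l1.getLast? = some y)
    (d1 : ∀ x ∈ l1.dropLast, x ∉ Z)
    (c2 : l2.Chain' E) (h2 : l2.head? = some b) (g2 : l2.getLast? = some z)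
    (d2 : ∀ x ∈ l2.dropLast, x ∉ Z) :
    ∃ T : List V, T.Chain' (fun a c => E a c ∨ E c a) ∧ T.head? = some y ∧
      T.getLast? = some z ∧
      (∀ α β γ, [α, β, γ] <:+: T → β ∉ Z ∧ ¬(E α β ∧ E γ β)) ∧
      (∀ α, [α, z] <:+ T → E α z ∨ z ∉ Z) ∧
      (∀ γ, [y, γ] <+: T → E γ y ∨ y ∉ Z) := by
  obtain ⟨t2, rfl⟩ : ∃ t2, l2 = b :: t2 := by
    cases l2 with
    | nil => simp at h2
    | cons a t =>
      refine ⟨t, ?_⟩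
      have : a = b := by simpa using h2
      rw [this]
  have hb2 : (b :: t2).head? = some b := rfl
  have hl1ne : l1 ≠ [] := by intro h; rw [h] at h1; simp at h1
  refine ⟨l1.reverse ++ (b :: t2).tail, ?_, ?_, ?_, ?_, ?_, ?_⟩
  · -- chain'
    rw [List.Chain', List.isChain_append]
    refine ⟨?_, ?_, ?_⟩
    · rw [List.isChain_reverse]
      exact c1.imp (fun a c h => Or.inr h)
    · exact (c2.imp (fun a c h => Or.inl h)).tail
    · intro a ha c hc
      rw [List.getLast?_reverse, h1] at ha
      simp only [Option.mem_def, Option.some.injEq] at ha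
      subst ha
      exact Or.inl ((List.isChain_cons.mp c2).1 c hc)
  · rw [List.head?_append, List.head?_reverse, g1]; rfl
  · cases t2 with
    | nil =>
      have hz : z = b := by simpa using g2.symm
      subst hz
      simpa [List.getLast?_reverse] using h1
    | cons g t2' =>
      rw [List.getLast?_append_of_ne_nil _ (by simp)]
      rw [List.getLast?_cons_cons] at g2
      exact g2
  · intro α β γ hinf
    rcases tripleInfixAppend hinf with h | h | ⟨hsuf, γt, hγt⟩ | ⟨⟨t, ht⟩, hpre⟩
    · -- inside reversed l1
      have h' : [γ, β, α] <:+: l1 := by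
        rw [← List.reverse_infix]
        simpa using h
      obtain ⟨hγβ, hβα⟩ := chainTriple c1 h'
      refine ⟨d1 β (memDropLast (tripleTail h')), ?_⟩
      rintro ⟨hαβ, -⟩
      exact acBoth hacyc hαβ hβα
    · -- inside l2.tail
      have h' : [α, β, γ] <:+: b :: t2 := h.trans (List.tail_suffix _).isInfix
      obtain ⟨hαβ, hβγ⟩ := chainTriple c2 h'
      refine ⟨d2 β (memDropLast (tripleTail h')), ?_⟩
      rintro ⟨-, hγβ⟩
      exact acBoth hacyc hβγ hγβ
    · -- junction at b
      have hβ : β = b := by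
        have h3 := suffGetLast hsuf (by simp)
        rw [List.getLast?_reverse, h1] at h3
        simpa using h3.symm
      subst hβ
      have hpref : [β, α] <+: l1 := by
        rw [← List.reverse_suffix]
        simpa using hsuf
      obtain ⟨rest, hrest⟩ := hpref
      have hβα : E β α := chainPair c1 (⟨[], rest, by rw [← hrest]; simp⟩ : [β, α] <:+: l1)
      have hβγ : E β γ := by
        refine (List.isChain_cons.mp c2).1 γ ?_
        have : t2 = γ :: γt := by simpa using hγt
        rw [this]; rfl
      refine ⟨d1 β (memDropLast (⟨[], rest, by rw [← hrest]; simp⟩ : [β, α] <:+: l1)), ?_⟩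
      rintro ⟨hαβ, -⟩
      exact acBoth hacyc hαβ hβα
    · -- triple starts at b, goes into l2
      have hα : α = b := by
        have h3 := congrArg List.getLast? ht
        rw [List.getLast?_reverse, h1, List.getLast?_append_of_ne_nil _ (by simp)] at h3
        simpa using h3.symm
      subst hα
      obtain ⟨t', ht'⟩ := hpre
      have h' : [α, β, γ] <:+: α :: t2 := by
        refine List.IsPrefix.isInfix ⟨t', ?_⟩
        simp only [List.tail_cons] at ht'
        rw [show [α, β, γ] ++ t' = α :: ([β, γ] ++ t') from rfl, ht']
      obtain ⟨hαβ, hβγ⟩ := chainTriple c2 h'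
      refine ⟨d2 β (memDropLast (tripleTail h')), ?_⟩
      rintro ⟨-, hγβ⟩
      exact acBoth hacyc hβγ hγβ
  · -- end edge
    intro α hsuf
    rcases pairSuffixAppend hsuf with h | ⟨t, ht, htl⟩ | ⟨hs1, htl⟩
    · exact Or.inl (chainPair c2 (h.trans (List.tail_suffix _)).isInfix)
    · have hα : α = b := by
        have h3 := congrArg List.getLast? ht
        rw [List.getLast?_reverse, h1, List.getLast?_append_of_ne_nil _ (by simp)] at h3
        simpa using h3.symm
      subst hα
      have ht2 : t2 = [z] := by simpa using htl
      exact Or.inl (chainPair c2 (⟨[], [], by rw [ht2]; rfl⟩ : [α, z] <:+: α :: t2))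
    · have ht2 : t2 = [] := by simpa using htl
      subst ht2
      have hz : z = b := by simpa using g2.symm
      subst hz
      have hpref : [z, α] <+: l1 := by
        rw [← List.reverse_suffix]
        simpa using hs1
      obtain ⟨rest, hrest⟩ := hpref
      exact Or.inr (d1 z (memDropLast (⟨[], rest, by rw [← hrest]; simp⟩ : [z, α] <:+: l1)))
  · -- begin edge
    intro γ hpre
    rcases pairPrefixAppend hpre with h | ⟨hrev, t', ht'⟩ | ⟨hnil, -⟩
    · have h' : [γ, y] <:+ l1 := by
        rw [← List.reverse_prefix]
        simpa using h
      exact Or.inl (chainPair c1 h'.isInfix)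
    · have hl1 : l1 = [y] := by
        have := congrArg List.reverse hrev
        simpa using this
      have hby : b = y := by rw [hl1] at h1; simpa using h1.symm
      subst hby
      have ht2 : t2 = γ :: t' := by simpa using ht'
      exact Or.inr (d2 b (memDropLast (⟨[], t', by rw [ht2]; rfl⟩ : [b, γ] <:+: b :: t2)))
    · exact absurd (by simpa using hnil) hl1ne

end Helpers2

section Helpers3

variable {V : Type} {E : V → V → Prop} {Z : Set V}

/-- Any d-connected walk contains a d-connected path. -/
private lemma walkToPath (hacyc : AcyclicRel E) :
    ∀ (n : ℕ) (l : List V) (u v : V), l.length ≤ n →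
      l.Chain' (fun a b => E a b ∨ E b a) → l.head? = some u → l.getLast? = some v →
      u ≠ v →
      (∀ b, Mediator E l b → b ∉ Z) → (∀ b, Confounder E l b → b ∉ Z) →
      (∀ b, Collider E l b → ∃ d ∈ Z, Descendant E b d) →
      DConnected E Z u v := by
  intro n
  induction n with
  | zero =>
    intro l u v hlen _ hh _ _ _ _ _
    rw [List.eq_nil_of_length_eq_zero (Nat.le_zero.mp hlen)] at hh
    simp at hh
  | succ n ih =>
    intro l u v hlen hch hh hl hne hmed hconf hcol
    by_cases hnd : l.Nodup
    · refine ⟨l, ⟨⟨hch, hnd⟩, hh, hl, ?_⟩, hmed, hconf, hcol⟩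
      rcases l with _ | ⟨w, _ | ⟨w2, t⟩⟩
      · simp at hh
      · exfalso
        simp only [List.head?_cons, Option.some.injEq] at hh
        simp only [List.getLast?_singleton, Option.some.injEq] at hl
        exact hne (hh.symm.trans hl)
      · simp
    · obtain ⟨p, x, m, s, rfl⟩ := existsDup hnd
      have hch1 : ((p ++ [x]) ++ (m ++ x :: s)).Chain' (fun a b => E a b ∨ E b a) := by
        simpa using hch
      rw [List.Chain', List.isChain_append] at hch1
      obtain ⟨hcp, hcm, hlink1⟩ := hch1
      have hgpx : (p ++ [x]).getLast? = some x := by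
        rw [List.getLast?_append_of_ne_nil _ (by simp)]; rfl
      have hxm : ∀ b' ∈ (m ++ x :: s).head?, E x b' ∨ E b' x := fun b' hb' =>
        hlink1 x (by rw [hgpx]; rfl) b' hb'
      obtain ⟨m0, m', rfl⟩ : ∃ m0 m', m = m0 :: m' := by
        cases m with
        | nil =>
          exfalso
          rcases hxm x (by simp) with h | h <;> exact acSelf hacyc h
        | cons a t => exact ⟨a, t, rfl⟩
      have hxm0 : E x m0 ∨ E m0 x := hxm m0 (by simp)
      have hcm2 : (((m0 :: m') ++ [x]) ++ s).Chain' (fun a b => E a b ∨ E b a) := by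
        simpa [List.Chain'] using hcm
      rw [List.Chain', List.isChain_append] at hcm2
      obtain ⟨hcmx, hcs, hlink2⟩ := hcm2
      have hgmx : ((m0 :: m') ++ [x]).getLast? = some x := by
        rw [List.getLast?_append_of_ne_nil _ (by simp)]; rfl
      have hxs : ∀ b' ∈ s.head?, E x b' ∨ E b' x := fun b' hb' =>
        hlink2 x (by rw [hgmx]; rfl) b' hb'
      obtain ⟨m'', me, hm⟩ : ∃ m'' me, m0 :: m' = m'' ++ [me] :=
        ⟨(m0 :: m').dropLast, (m0 :: m').getLast (by simp),
          (List.dropLast_append_getLast (by simp)).symm⟩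
      have hmex : E me x ∨ E x me :=
        chainPair (E := fun a b => E a b ∨ E b a) hcmx (⟨m'', [], by rw [hm]; simp⟩ : [me, x] <:+: (m0 :: m') ++ [x])
      -- infix facts about the old list
      have hTleft : ∀ α p', p = p' ++ [α] →
          [α, x, m0] <:+: p ++ x :: ((m0 :: m') ++ x :: s) :=
        fun α p' hp => ⟨p', m' ++ x :: s, by rw [hp]; simp⟩
      have hTright : ∀ γ s', s = γ :: s' →
          [me, x, γ] <:+: p ++ x :: ((m0 :: m') ++ x :: s) :=
        fun γ s' hs => ⟨p ++ x :: m'', s', by rw [hs, show m0 :: m' = m'' ++ [me] from hm]; simp⟩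
      have hC : ((x :: (m0 :: m')) ++ [x]) <:+: p ++ x :: ((m0 :: m') ++ x :: s) :=
        ⟨p, s, by simp⟩
      -- facts about the new list
      have hh' : ((p ++ [x]) ++ s).head? = some u := by
        have heq : ((p ++ [x]) ++ s).head? = (p ++ x :: ((m0 :: m') ++ x :: s)).head? := by
          cases p <;> simp
        rw [heq]; exact hh
      have hl' : ((p ++ [x]) ++ s).getLast? = some v := by
        have hold : (p ++ x :: ((m0 :: m') ++ x :: s)).getLast? = (x :: s).getLast? := by
          rw [show p ++ x :: ((m0 :: m') ++ x :: s) = (p ++ x :: (m0 :: m')) ++ (x :: s) by simp,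
            List.getLast?_append_of_ne_nil _ (by simp)]
        have hnew : ((p ++ [x]) ++ s).getLast? = (x :: s).getLast? := by
          rw [show (p ++ [x]) ++ s = p ++ (x :: s) by simp,
            List.getLast?_append_of_ne_nil _ (by simp)]
        rw [hnew, ← hold]; exact hl
      have hch' : ((p ++ [x]) ++ s).Chain' (fun a b => E a b ∨ E b a) := by
        rw [List.Chain', List.isChain_append]
        refine ⟨hcp, hcs, fun a ha b hb => ?_⟩
        rw [hgpx] at ha
        simp only [Option.mem_def, Option.some.injEq] at ha
        subst ha
        exact hxs b hb
      have hlen' : ((p ++ [x]) ++ s).length ≤ n := by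
        simp only [List.length_append, List.length_cons, List.length_nil] at hlen ⊢
        omega
      -- decomposition of triples on the new list
      have hdec : ∀ α β γ, [α, β, γ] <:+: (p ++ [x]) ++ s →
          [α, β, γ] <:+: p ++ x :: ((m0 :: m') ++ x :: s) ∨
          (β = x ∧ (∃ p', p = p' ++ [α]) ∧ (∃ s', s = γ :: s')) := by
        intro α β γ h
        rcases tripleInfixAppend h with h | h | ⟨hsuf, t, ht⟩ | ⟨⟨t, ht⟩, hpre⟩
        · exact Or.inl (h.trans ⟨[], (m0 :: m') ++ x :: s, by simp⟩)
        · exact Or.inl (h.trans ⟨p ++ [x] ++ (m0 :: m') ++ [x], [], by simp⟩)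
        · have hβ : β = x := by
            have h3 := suffGetLast hsuf (by simp)
            rw [hgpx] at h3
            simpa using h3.symm
          rcases pairSuffixAppend hsuf with h2 | ⟨t', ht', _⟩ | ⟨h2, habs⟩
          · exfalso
            obtain ⟨q, hq⟩ := h2
            have := congrArg List.length hq
            simp at this
          · exact Or.inr ⟨hβ, ⟨t', ht'⟩, ⟨t, ht⟩⟩
          · exact absurd habs (by simp)
        · have hα : α = x := by
            have h3 := congrArg List.getLast? ht
            rw [hgpx, List.getLast?_append_of_ne_nil _ (by simp)] at h3
            simpa using h3.symm
          obtain ⟨t', ht'⟩ := hpre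
          exact Or.inl ⟨p ++ [x] ++ (m0 :: m'), t', by rw [hα, ← ht']; simp⟩
      -- the three conditions on the new list
      have hmed' : ∀ b', Mediator E ((p ++ [x]) ++ s) b' → b' ∉ Z := by
        rintro b' ⟨α, γ, hinf, hedge⟩
        rcases hdec α b' γ hinf with h | ⟨hβ, ⟨p', hp'⟩, ⟨s', hs'⟩⟩
        · exact hmed b' ⟨α, γ, h, hedge⟩
        · rw [hβ] at hedge ⊢
          rcases hedge with ⟨hαx, hxγ⟩ | ⟨hxα, hγx⟩
          · rcases hmex with h1 | h1
            · exact hmed x ⟨me, γ, hTright γ s' hs', Or.inl ⟨h1, hxγ⟩⟩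
            · exact hconf x ⟨me, γ, hTright γ s' hs', h1, hxγ⟩
          · rcases hxm0 with h0 | h0
            · exact hconf x ⟨α, m0, hTleft α p' hp', hxα, h0⟩
            · exact hmed x ⟨α, m0, hTleft α p' hp', Or.inr ⟨hxα, h0⟩⟩
      have hconf' : ∀ b', Confounder E ((p ++ [x]) ++ s) b' → b' ∉ Z := by
        rintro b' ⟨α, γ, hinf, hxα, hxγ⟩
        rcases hdec α b' γ hinf with h | ⟨hβ, ⟨p', hp'⟩, ⟨s', hs'⟩⟩
        · exact hconf b' ⟨α, γ, h, hxα, hxγ⟩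
        · rw [hβ] at hxα hxγ ⊢
          rcases hxm0 with h0 | h0
          · exact hconf x ⟨α, m0, hTleft α p' hp', hxα, h0⟩
          · exact hmed x ⟨α, m0, hTleft α p' hp', Or.inr ⟨hxα, h0⟩⟩
      have hcol' : ∀ b', Collider E ((p ++ [x]) ++ s) b' → ∃ d ∈ Z, Descendant E b' d := by
        rintro b' ⟨α, γ, hinf, hαx, hγx⟩
        rcases hdec α b' γ hinf with h | ⟨hβ, ⟨p', hp'⟩, ⟨s', hs'⟩⟩
        · exact hcol b' ⟨α, γ, h, hαx, hγx⟩
        · rw [hβ] at hαx hγx ⊢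
          rcases hxm0 with h0 | h0
          · rcases hmex with h1 | h1
            · exact hcol x ⟨me, γ, hTright γ s' hs', h1, hγx⟩
            · obtain ⟨y, α', γ', hinf', he1, he2, hrt⟩ :=
                findCollider hacyc (m0 :: m') x x m0 me (hch.infix hC) rfl h0
                  (by rw [show x :: m0 :: m' = (x :: m'') ++ [me] by rw [hm]; rfl,
                    List.getLast?_append_of_ne_nil _ (by simp)]; rfl) h1
              obtain ⟨d, hdZ, hd⟩ := hcol y ⟨α', γ', hinf'.trans hC, he1, he2⟩
              exact ⟨d, hdZ, hrt.trans hd⟩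
          · exact hcol x ⟨α, m0, hTleft α p' hp', hαx, h0⟩
      exact ih ((p ++ [x]) ++ s) u v hlen' hch' hh' hl' hne hmed' hconf' hcol'

end Helpers3

section Helpers4

variable {V : Type} {E : V → V → Prop} {Z : Set V}

private lemma ancList (h : UnblockedAnc E Z w y) :
    ∃ l : List V, l.Chain' E ∧ l.head? = some w ∧ l.getLast? = some y ∧
      ∀ x ∈ l.dropLast, x ∉ Z := by
  rcases h with rfl | ⟨l, h1, h2, h3, h4⟩
  · exact ⟨[w], List.isChain_singleton w, rfl, rfl, by simp⟩
  · exact ⟨l, h1, h2, h3, h4⟩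

private lemma diffPath {X : Type} [Fintype V] (pa : V → List V)
    (hacyc : AcyclicRel (fun a b => a ∈ pa b))
    (g : V → X → List X → X) (f : (V → X) → V → X)
    (hf : ∀ (U : V → X) (w : V), f U w = g w (U w) ((pa w).map (f U)))
    (U U' : V → X) :
    ∀ v, f U v ≠ f U' v → ∃ (a : V) (l : List V), U a ≠ U' a ∧ l.Chain' (fun a b => a ∈ pa b) ∧
      l.head? = some a ∧ l.getLast? = some v ∧ ∀ x ∈ l, f U x ≠ f U' x := by
  classical
  have hwf : WellFounded (fun a b => a ∈ pa b) := by
    haveI : IsIrrefl V (Relation.TransGen fun a b => a ∈ pa b) := ⟨hacyc⟩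
    exact Subrelation.wf (fun h => Relation.TransGen.single h)
      (Finite.wellFounded_of_trans_of_irrefl (Relation.TransGen fun a b => a ∈ pa b))
  refine fun v => hwf.induction
    (C := fun v => f U v ≠ f U' v → ∃ (a : V) (l : List V), U a ≠ U' a ∧
      l.Chain' (fun a b => a ∈ pa b) ∧ l.head? = some a ∧ l.getLast? = some v ∧
      ∀ x ∈ l, f U x ≠ f U' x) v ?_
  intro v ihv hv
  by_cases hU : U v = U' v
  · have hm : ∃ p ∈ pa v, f U p ≠ f U' p := by
      by_contra hcon
      push_neg at hcon
      exact hv (by rw [hf U v, hf U' v, hU, List.map_congr_left hcon])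
    obtain ⟨p, hp, hfp⟩ := hm
    obtain ⟨a, l, ha, hch, hhd, hlast, hall⟩ := ihv p hp hfp
    refine ⟨a, l ++ [v], ha, ?_, ?_, ?_, ?_⟩
    · rw [List.Chain', List.isChain_append]
      refine ⟨hch, List.isChain_singleton v, fun x hx y hy => ?_⟩
      rw [hlast] at hx
      simp only [Option.mem_def, Option.some.injEq] at hx hy
      subst hx
      simp only [List.head?_cons, Option.some.injEq] at hy
      subst hy
      exact hp
    · rw [List.head?_append, hhd]; rfl
    · rw [List.getLast?_append_of_ne_nil _ (by simp)]; rfl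
    · intro x hx
      rcases List.mem_append.mp hx with h | h
      · exact hall x h
      · simp only [List.mem_singleton] at h
        subst h
        exact hv
  · refine ⟨v, [v], hU, List.isChain_singleton v, rfl, rfl, ?_⟩
    intro x hx
    simp only [List.mem_singleton] at hx
    subst hx
    exact hv

end Helpers4

/-- If a three-step sequence of exogenous assignments satisfying the semantic
separation conditions changes the value of `v`, then `u` and `v` are
d-connected given `Z`. -/
theorem short_sequence_dConnected {V X : Type} [Fintype V]
    (pa : V → List V) (hacyc : AcyclicRel (fun a b => a ∈ pa b))
    (Z : Set V) (AZ : V → X)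
    (g : V → X → List X → X) (f : (V → X) → V → X)
    (hf : ∀ (U : V → X) (w : V), f U w = g w (U w) ((pa w).map (f U)))
    (u v : V) (hvZ : v ∉ Z) (hne : v ≠ u)
    (U0 U1 U2 : V → X)
    (h0 : ∀ z ∈ Z, f U0 z = AZ z) (h2 : ∀ z ∈ Z, f U2 z = AZ z)
    (h01 : ∀ a, U0 a ≠ U1 a → UnblockedAnc (fun a b => a ∈ pa b) Z a u)
    (h12 : ∀ a', U1 a' ≠ U2 a' →
      ∃ z ∈ Z, UnblockedAnc (fun a b => a ∈ pa b) Z a' z ∧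
        ∃ a, UnblockedAnc (fun a b => a ∈ pa b) Z a z ∧ U0 a ≠ U1 a)
    (hv : f U0 v ≠ f U2 v) :
    DConnected (fun a b => a ∈ pa b) Z u v := by
  classical
  obtain ⟨a, lav, hUa, c_av, h_av, g_av, hdiff⟩ := diffPath pa hacyc g f hf U0 U2 v hv
  have hnZ : ∀ x ∈ lav, x ∉ Z := fun x hx hxZ => hdiff x hx (by rw [h0 x hxZ, h2 x hxZ])
  have d_av : ∀ x ∈ lav.dropLast, x ∉ Z := fun x hx => hnZ x (List.dropLast_subset _ hx)
  by_cases hc : U0 a = U1 a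
  · -- here U1 a ≠ U2 a: the change at `a` happened in the restoration step
    have h12a : U1 a ≠ U2 a := fun h => hUa (hc.trans h)
    obtain ⟨z, hzZ, hancaz, b, hancbz, hb01⟩ := h12 a h12a
    obtain ⟨lbu, c_bu, h_bu, g_bu, d_bu⟩ := ancList (h01 b hb01)
    obtain ⟨lbz, c_bz, h_bz, g_bz, d_bz⟩ := ancList hancbz
    obtain ⟨laz, c_az, h_az, g_az, d_az⟩ := ancList hancaz
    obtain ⟨T₁, ch1, hh1, hl1, tri1, end1, beg1⟩ :=
      trek (Z := Z) hacyc c_bu h_bu g_bu d_bu c_bz h_bz g_bz d_bz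
    obtain ⟨T₂, ch2, hh2, hl2, tri2, end2, beg2⟩ :=
      trek (Z := Z) hacyc c_az h_az g_az d_az c_av h_av g_av d_av
    obtain ⟨t2, rfl⟩ : ∃ t2, T₂ = z :: t2 := by
      cases T₂ with
      | nil => simp at hh2
      | cons w t =>
        refine ⟨t, ?_⟩
        have : w = z := by simpa using hh2
        rw [this]
    obtain ⟨γ0, t2', rfl⟩ : ∃ γ0 t2', t2 = γ0 :: t2' := by
      cases t2 with
      | nil =>
        exfalso
        have hz : z = v := by simpa using hl2
        exact hvZ (hz ▸ hzZ)
      | cons w t => exact ⟨w, t, rfl⟩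
    have hEγ0 : γ0 ∈ pa z := by
      rcases beg2 γ0 ⟨t2', rfl⟩ with h | h
      · exact h
      · exact absurd hzZ h
    have hT1ne : T₁ ≠ [] := by
      intro h
      rw [h] at hh1
      simp at hh1
    have hchW : (T₁ ++ (γ0 :: t2')).Chain'
        (fun a b => (fun a b => a ∈ pa b) a b ∨ (fun a b => a ∈ pa b) b a) := by
      rw [List.Chain', List.isChain_append]
      refine ⟨ch1, ch2.tail, fun a' ha' b' hb' => ?_⟩
      rw [hl1] at ha'
      simp only [Option.mem_def, Option.some.injEq, List.head?_cons] at ha' hb'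
      subst ha'
      subst hb'
      exact Or.inr hEγ0
    have hhW : (T₁ ++ (γ0 :: t2')).head? = some u := by
      rw [List.head?_append, hh1]; rfl
    have hlW : (T₁ ++ (γ0 :: t2')).getLast? = some v := by
      rw [List.getLast?_append_of_ne_nil _ (by simp)]
      rw [List.getLast?_cons_cons] at hl2
      exact hl2
    have htri : ∀ α β γ, [α, β, γ] <:+: T₁ ++ (γ0 :: t2') →
        (β ∉ Z ∧ ¬(α ∈ pa β ∧ γ ∈ pa β)) ∨ (β = z ∧ α ∈ pa β ∧ γ ∈ pa β) := by
      intro α β γ h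
      rcases tripleInfixAppend h with h | h | ⟨hsuf, t, ht⟩ | ⟨⟨t, ht⟩, hpre⟩
      · exact Or.inl (tri1 α β γ h)
      · exact Or.inl (tri2 α β γ
          (h.trans (⟨[z], [], by simp⟩ : (γ0 :: t2') <:+: z :: γ0 :: t2')))
      · have hβ : β = z := by
          have h3 := suffGetLast hsuf (by simp)
          rw [hl1] at h3
          simpa using h3.symm
        have hsuf' : [α, z] <:+ T₁ := by rw [← hβ]; exact hsuf
        have hαz : α ∈ pa z := by
          rcases end1 α hsuf' with h4 | h4
          · exact h4
          · exact absurd hzZ h4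
        have hγz : γ ∈ pa z := by
          have hγ : γ = γ0 := (List.cons.inj ht.symm).1
          rw [hγ]
          exact hEγ0
        exact Or.inr ⟨hβ, by rw [hβ]; exact hαz, by rw [hβ]; exact hγz⟩
      · have hα : α = z := by
          have h3 := congrArg List.getLast? ht
          rw [hl1, List.getLast?_append_of_ne_nil _ (by simp)] at h3
          simpa using h3.symm
        obtain ⟨t', ht'⟩ := hpre
        refine Or.inl (tri2 α β γ ⟨[], t', ?_⟩)
        rw [hα, ← ht']
        simp
    refine walkToPath hacyc (T₁ ++ (γ0 :: t2')).length (T₁ ++ (γ0 :: t2')) u v le_rfl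
      hchW hhW hlW hne.symm ?_ ?_ ?_
    · rintro b' ⟨α, γ, hinf, hedge⟩
      rcases htri α b' γ hinf with ⟨hb, -⟩ | ⟨hβ, hh1', hh2'⟩
      · exact hb
      · exfalso
        rcases hedge with ⟨ha, hb⟩ | ⟨ha, hb⟩
        · exact acBoth hacyc hb hh2'
        · exact acBoth hacyc hh1' ha
    · rintro b' ⟨α, γ, hinf, ha, hb⟩
      rcases htri α b' γ hinf with ⟨hbz, -⟩ | ⟨hβ, hh1', hh2'⟩
      · exact hbz
      · exact absurd hh1' (fun h => acBoth hacyc h ha)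
    · rintro b' ⟨α, γ, hinf, ha, hb⟩
      rcases htri α b' γ hinf with ⟨-, hno⟩ | ⟨hβ, -, -⟩
      · exact absurd ⟨ha, hb⟩ hno
      · exact ⟨z, hzZ, by rw [hβ]; exact Relation.ReflTransGen.refl⟩
  · -- here U0 a ≠ U1 a: single trek from u through a to v
    obtain ⟨lau, c_au, h_au, g_au, d_au⟩ := ancList (h01 a hc)
    obtain ⟨T, chT, hhT, hlT, triT, -, -⟩ :=
      trek (Z := Z) hacyc c_au h_au g_au d_au c_av h_av g_av d_av
    refine walkToPath hacyc T.length T u v le_rfl chT hhT hlT hne.symm ?_ ?_ ?_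
    · rintro b' ⟨α, γ, hinf, hedge⟩
      exact (triT α b' γ hinf).1
    · rintro b' ⟨α, γ, hinf, -, -⟩
      exact (triT α b' γ hinf).1
    · rintro b' ⟨α, γ, hinf, ha, hb⟩
      exact absurd ⟨ha, hb⟩ (triT α b' γ hinf).2
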